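/- Let 1 ≤ q, q' ≤ ∞ with 1/q + 1/q' = 1, and let f ∈ L^q(ℝ) and g ∈ L^{q'}(ℝ) be nonnegative, even functions that are nonincreasing on [0,∞). Then the convolution f∗g, defined by (f∗g)(x) = ∫_ℝ f(y) g(x−y) dy, is a nonnegative even function that is nonincreasing on [0,∞); in particular (f∗g)(x) ≤ (f∗g)(0) for all x ∈ ℝ. -/

import Mathlib

open MeasureTheory ENNReal

/-- Convolution on `ℝ` (Lebesgue measure): `(f ∗ g)(x) = ∫ f(y) g(x−y) dy`. -/
noncomputable def convR (f g : ℝ → ℝ) (x : ℝ) : ℝ := ∫ y : ℝ, f y * g (x - y)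

/-- An even function antitone on `[0,∞)` is monotone in `|·|`. -/
lemma even_anti_abs {f : ℝ → ℝ} (hfe : ∀ x, f (-x) = f x)
    (hfm : AntitoneOn f (Set.Ici 0)) {u v : ℝ} (h : |u| ≤ |v|) : f v ≤ f u := by
  have hu : f |u| = f u := by rcases abs_choice u with h' | h' <;> rw [h'] ; exact hfe u
  have hv : f |v| = f v := by rcases abs_choice v with h' | h' <;> rw [h'] ; exact hfe v
  rw [← hu, ← hv]
  exact hfm (abs_nonneg u) ((abs_nonneg u).trans h) h

lemma integral_shift (s : ℝ) (h : ℝ → ℝ) : (∫ y : ℝ, h (s - y)) = ∫ y : ℝ, h y :=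
  (Measure.measurePreserving_sub_left volume s).integral_comp
    (MeasurableEquiv.subLeft s).measurableEmbedding h

lemma integrable_shift {h : ℝ → ℝ} (s : ℝ) (hi : Integrable h volume) :
    Integrable (fun y => h (s - y)) volume := by
  rw [← memLp_one_iff_integrable] at hi ⊢
  exact hi.comp_measurePreserving (Measure.measurePreserving_sub_left volume s)

/-- If `f ∈ L^q`, `g ∈ L^{q'}` with `1/q + 1/q' = 1` are nonnegative, even and
nonincreasing on `[0,∞)`, then so is `f ∗ g`; in particular `f ∗ g` attains its
maximum at `0`. -/
theorem conv_even_antitone (q q' : ℝ≥0∞) (hq : 1 ≤ q) (hq' : 1 ≤ q')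
    (hconj : 1 / q + 1 / q' = 1) (f g : ℝ → ℝ)
    (hf : MemLp f q volume) (hg : MemLp g q' volume)
    (hf0 : ∀ x, 0 ≤ f x) (hg0 : ∀ x, 0 ≤ g x)
    (hfe : ∀ x, f (-x) = f x) (hge : ∀ x, g (-x) = g x)
    (hfm : AntitoneOn f (Set.Ici 0)) (hgm : AntitoneOn g (Set.Ici 0)) :
    (∀ x, 0 ≤ convR f g x) ∧ (∀ x, convR f g (-x) = convR f g x) ∧
      AntitoneOn (convR f g) (Set.Ici 0) ∧ ∀ x, convR f g x ≤ convR f g 0 := by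
  have h1 : (1:ℝ≥0∞) / 1 = 1 / q + 1 / q' := by rw [hconj]; simp
  -- integrability of all translated products
  have hint : ∀ c : ℝ, Integrable (fun y => f y * g (c - y)) volume := by
    intro c
    have hgc : MemLp (fun y => g (c - y)) q' volume :=
      hg.comp_measurePreserving (Measure.measurePreserving_sub_left volume c)
    rw [← memLp_one_iff_integrable]
    simpa [smul_eq_mul, Pi.mul_def] using hgc.smul hf (hpqr := ⟨by simpa [one_div] using h1.symm⟩)
  have hnn : ∀ x, 0 ≤ convR f g x := fun x =>
    integral_nonneg fun y => mul_nonneg (hf0 y) (hg0 _)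
  have heven : ∀ x, convR f g (-x) = convR f g x := by
    intro x
    unfold convR
    rw [← integral_neg_eq_self (fun y => f y * g (-x - y)) volume]
    congr 1; funext y
    rw [hfe, ← hge (x - y)]
    ring_nf
  have hanti : AntitoneOn (convR f g) (Set.Ici 0) := by
    intro a ha b hb hab
    simp only [Set.mem_Ici] at ha hb
    set s := a + b with hs
    -- pointwise nonnegativity of the rearranged integrand
    have hpt : ∀ y : ℝ, 0 ≤ (f y - f (s - y)) * (g (a - y) - g (b - y)) := by
      intro y
      rcases le_or_gt y (s / 2) with hy | hy
      · have h1 : f (s - y) ≤ f y :=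
          even_anti_abs hfe hfm (abs_le_abs (by linarith) (by linarith))
        have h2 : g (b - y) ≤ g (a - y) :=
          even_anti_abs hge hgm (abs_le_abs (by linarith) (by linarith))
        exact mul_nonneg (by linarith) (by linarith)
      · have h1 : f y ≤ f (s - y) :=
          even_anti_abs hfe hfm (abs_le_abs (by linarith) (by linarith))
        have h2 : g (a - y) ≤ g (b - y) := by
          apply even_anti_abs hge hgm
          rw [abs_sub_comm a y, abs_sub_comm b y]
          exact abs_le_abs (by linarith) (by linarith)
        nlinarith [mul_nonneg (sub_nonneg.2 h1) (sub_nonneg.2 h2)]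
    -- the four integrals
    have hia : Integrable (fun y => f y * g (a - y)) volume := hint a
    have hib : Integrable (fun y => f y * g (b - y)) volume := hint b
    -- shifted ones: f (s - y) * g (c - y) = H (s - y) with H z = f z * g ((c - s) + z)
    have key : ∀ c : ℝ,
        Integrable (fun y => f (s - y) * g (c - y)) volume ∧
          (∫ y : ℝ, f (s - y) * g (c - y)) = ∫ y : ℝ, f y * g ((c - s) + y) := by
      intro c
      have hgc : MemLp (fun z => g ((c - s) + z)) q' volume :=
        hg.comp_measurePreserving (measurePreserving_add_left volume (c - s))
      have hH : Integrable (fun z => f z * g ((c - s) + z)) volume := by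
        rw [← memLp_one_iff_integrable]
        simpa [smul_eq_mul, Pi.mul_def] using hgc.smul hf (hpqr := ⟨by simpa [one_div] using h1.symm⟩)
      have heq : (fun y => f (s - y) * g (c - y)) =
          fun y => (fun z => f z * g ((c - s) + z)) (s - y) := by
        funext y; congr 2; ring
      constructor
      · rw [heq]; exact integrable_shift s hH
      · rw [heq]; simpa using integral_shift s (fun z => f z * g (c - s + z))
    obtain ⟨hic, hc⟩ := key a
    obtain ⟨hid, hd⟩ := key b
    -- identify the shifted integrals
    have hCval : (∫ y : ℝ, f (s - y) * g (a - y)) = convR f g b := by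
      rw [hc]; unfold convR; congr 1; funext y
      rw [← hge (b - y)]; congr 2; rw [hs]; ring
    have hDval : (∫ y : ℝ, f (s - y) * g (b - y)) = convR f g a := by
      rw [hd]; unfold convR; congr 1; funext y
      rw [← hge (a - y)]; congr 2; rw [hs]; ring
    have hexp : (∫ y : ℝ, (f y - f (s - y)) * (g (a - y) - g (b - y)))
        = convR f g a - convR f g b - (convR f g b - convR f g a) := by
      have : ∀ y : ℝ, (f y - f (s - y)) * (g (a - y) - g (b - y)) =
          (f y * g (a - y) - f y * g (b - y)) -
            (f (s - y) * g (a - y) - f (s - y) * g (b - y)) := by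
        intro y; ring
      have hF1 : Integrable (fun y => f y * g (a - y) - f y * g (b - y)) volume :=
        hia.sub hib
      have hF2 : Integrable
          (fun y => f (s - y) * g (a - y) - f (s - y) * g (b - y)) volume := hic.sub hid
      rw [integral_congr_ae (Filter.Eventually.of_forall this),
        integral_sub hF1 hF2, integral_sub hia hib,
        integral_sub hic hid, hCval, hDval]
      rfl
    have hpos : 0 ≤ ∫ y : ℝ, (f y - f (s - y)) * (g (a - y) - g (b - y)) :=
      integral_nonneg hpt
    rw [hexp] at hpos
    linarith
  refine ⟨hnn, heven, hanti, fun x => ?_⟩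
  rcases le_or_gt 0 x with hx | hx
  · exact hanti (le_refl (0:ℝ)) hx hx
  · rw [← heven x]
    exact hanti (le_refl (0:ℝ)) (by linarith : (0:ℝ) ≤ -x) (by linarith)
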